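/- If κ and ℓ are nonnegative, nonincreasing, locally integrable functions on (0,∞) with κ ⋆ ℓ = 1, then h_ℓ(t) h_κ(t) ≥ t for all t > 0, where h_κ(t) = ∫₀ᵗ κ and h_ℓ(t) = ∫₀ᵗ ℓ. In particular h_ℓ(t) ≥ t / h_κ(t). -/

import Mathlib

open MeasureTheory Set intervalIntegral
open scoped ENNReal

private lemma lint_shift (g : ℝ → ℝ≥0∞) (τ a b : ℝ) :
    ∫⁻ s in Ioo a b, g (s - τ) = ∫⁻ u in Ioo (a - τ) (b - τ), g u := by
  have h : ∀ s : ℝ, (Ioo a b).indicator (fun s => g (s - τ)) s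
      = (Ioo (a - τ) (b - τ)).indicator g (s - τ) := by
    intro s
    by_cases hs : s ∈ Ioo a b
    · rw [indicator_of_mem hs, indicator_of_mem (mem_Ioo.mpr ⟨by linarith [hs.1], by linarith [hs.2]⟩)]
    · rw [indicator_of_notMem hs,
        indicator_of_notMem (fun hc => hs (mem_Ioo.mpr ⟨by linarith [hc.1], by linarith [hc.2]⟩))]
  rw [← lintegral_indicator measurableSet_Ioo, ← lintegral_indicator measurableSet_Ioo]
  simp_rw [h]
  exact lintegral_sub_right_eq_self ((Ioo (a - τ) (b - τ)).indicator g) τ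

private lemma lint_reflect (g : ℝ → ℝ≥0∞) (a : ℝ) :
    ∫⁻ x in Ioo 0 a, g (a - x) = ∫⁻ x in Ioo 0 a, g x := by
  have h : ∀ x : ℝ, (Ioo 0 a).indicator (fun x => g (a - x)) x
      = (Ioo 0 a).indicator g (a - x) := by
    intro x
    by_cases hx : x ∈ Ioo 0 a
    · rw [indicator_of_mem hx, indicator_of_mem (mem_Ioo.mpr ⟨by linarith [hx.2], by linarith [hx.1]⟩)]
    · rw [indicator_of_notMem hx,
        indicator_of_notMem (fun hc => hx (mem_Ioo.mpr ⟨by linarith [hc.2], by linarith [hc.1]⟩))]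
  rw [← lintegral_indicator measurableSet_Ioo, ← lintegral_indicator measurableSet_Ioo]
  simp_rw [h]
  have : ∀ x : ℝ, (Ioo 0 a).indicator g (a - x)
      = (Ioo 0 a).indicator g (MeasurableEquiv.subLeft a x) := fun x => rfl
  simp_rw [this]
  rw [← lintegral_map_equiv ((Ioo 0 a).indicator g) (MeasurableEquiv.subLeft a)]
  congr 1
  exact Measure.map_sub_left_eq_self volume a

theorem stmt1 (κ ℓ : ℝ → ℝ)
    (hκint : LocallyIntegrableOn κ (Ioi 0))
    (hℓint : LocallyIntegrableOn ℓ (Ioi 0))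
    (hκ0 : ∀ t ∈ Ioi (0:ℝ), 0 ≤ κ t)
    (hℓ0 : ∀ t ∈ Ioi (0:ℝ), 0 ≤ ℓ t)
    (hκmono : AntitoneOn κ (Ioi 0))
    (hℓmono : AntitoneOn ℓ (Ioi 0))
    (hconv : ∀ t > (0:ℝ), (∫ τ in (0:ℝ)..t, κ τ * ℓ (t - τ)) = 1) :
    ∀ t > (0:ℝ), t ≤ (∫ τ in (0:ℝ)..t, ℓ τ) * (∫ τ in (0:ℝ)..t, κ τ) := by
  -- measurable versions of κ and ℓ
  have hκsm : AEStronglyMeasurable κ (volume.restrict (Ioi (0:ℝ))) :=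
    hκint.aestronglyMeasurable
  have hℓsm : AEStronglyMeasurable ℓ (volume.restrict (Ioi (0:ℝ))) :=
    hℓint.aestronglyMeasurable
  have hκm : AEMeasurable κ (volume.restrict (Ioi (0:ℝ))) := hκsm.aemeasurable
  have hℓm : AEMeasurable ℓ (volume.restrict (Ioi (0:ℝ))) := hℓsm.aemeasurable
  set κ' := hκm.mk κ with hκ'def
  set ℓ' := hℓm.mk ℓ with hℓ'def
  -- the convolution integrand is integrable
  have key : ∀ s > (0:ℝ), IntegrableOn (fun τ => κ τ * ℓ (s - τ)) (Ioo 0 s) volume := by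
    intro s hs
    by_contra h
    have h1 := hconv s hs
    rw [intervalIntegral.integral_of_le hs.le, integral_Ioc_eq_integral_Ioo,
      integral_undef h] at h1
    exact one_ne_zero h1.symm
  -- lintegral form of the convolution identity
  have hconvL : ∀ s > (0:ℝ), ∫⁻ τ in Ioo 0 s, ENNReal.ofReal (κ τ * ℓ (s - τ)) = 1 := by
    intro s hs
    have h1 := hconv s hs
    rw [intervalIntegral.integral_of_le hs.le, integral_Ioc_eq_integral_Ioo] at h1
    have hnn : 0 ≤ᵐ[volume.restrict (Ioo 0 s)] fun τ => κ τ * ℓ (s - τ) := by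
      filter_upwards [ae_restrict_mem measurableSet_Ioo] with τ hτ
      exact mul_nonneg (hκ0 τ (mem_Ioi.mpr hτ.1)) (hℓ0 _ (mem_Ioi.mpr (sub_pos.mpr hτ.2)))
    rw [← ofReal_integral_eq_lintegral_ofReal (key s hs) hnn, h1, ENNReal.ofReal_one]
  -- find a point where both κ and ℓ are positive
  have hex : ∃ τ₀ ∈ Ioo (0:ℝ) 1, κ τ₀ ≠ 0 ∧ ℓ (1 - τ₀) ≠ 0 := by
    by_contra h
    push_neg at h
    have hz : ∀ τ ∈ Ioo (0:ℝ) 1, κ τ * ℓ (1 - τ) = (fun _ => (0:ℝ)) τ := by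
      intro τ hτ
      rcases eq_or_ne (κ τ) 0 with h0 | h0
      · simp [h0]
      · simp [h τ hτ h0]
    have h1 := hconv 1 one_pos
    rw [intervalIntegral.integral_of_le one_pos.le, integral_Ioc_eq_integral_Ioo,
      setIntegral_congr_fun measurableSet_Ioo hz, MeasureTheory.integral_zero] at h1
    exact one_ne_zero h1.symm
  obtain ⟨τ₀, hτ₀, hκτ₀, hℓστ⟩ := hex
  have hc : 0 < κ τ₀ := lt_of_le_of_ne (hκ0 _ (mem_Ioi.mpr hτ₀.1)) (Ne.symm hκτ₀)
  set σ := 1 - τ₀ with hσdef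
  have hσ : σ ∈ Ioo (0:ℝ) 1 := ⟨by simp only [hσdef]; linarith [hτ₀.2], by simp only [hσdef]; linarith [hτ₀.1]⟩
  have hd : 0 < ℓ σ := lt_of_le_of_ne (hℓ0 _ (mem_Ioi.mpr hσ.1)) (Ne.symm hℓστ)
  -- ℓ has finite lintegral near 0
  have hℓfin0 : ∫⁻ u in Ioo 0 τ₀, ENNReal.ofReal (ℓ u) < ⊤ := by
    have h2 : ENNReal.ofReal (κ τ₀) * ∫⁻ τ in Ioo 0 τ₀, ENNReal.ofReal (ℓ (τ₀ - τ)) ≤ 1 := by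
      rw [← lintegral_const_mul' _ _ ENNReal.ofReal_ne_top, ← hconvL τ₀ hτ₀.1]
      refine lintegral_mono_ae ?_
      filter_upwards [ae_restrict_mem measurableSet_Ioo] with τ hτ
      rw [← ENNReal.ofReal_mul hc.le]
      exact ENNReal.ofReal_le_ofReal
        (mul_le_mul_of_nonneg_right (hκmono (mem_Ioi.mpr hτ.1) (mem_Ioi.mpr hτ₀.1) hτ.2.le)
          (hℓ0 _ (mem_Ioi.mpr (sub_pos.mpr hτ.2))))
    rw [lint_reflect (fun u => ENNReal.ofReal (ℓ u)) τ₀] at h2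
    by_contra h
    push_neg at h
    rw [top_le_iff.mp h, ENNReal.mul_top (ENNReal.ofReal_pos.mpr hc).ne'] at h2
    simp at h2
  -- κ has finite lintegral near 0
  have hκfin0 : ∫⁻ u in Ioo 0 σ, ENNReal.ofReal (κ u) < ⊤ := by
    have h2 : (∫⁻ τ in Ioo 0 σ, ENNReal.ofReal (κ τ)) * ENNReal.ofReal (ℓ σ) ≤ 1 := by
      rw [← lintegral_mul_const' _ _ ENNReal.ofReal_ne_top, ← hconvL σ hσ.1]
      refine lintegral_mono_ae ?_
      filter_upwards [ae_restrict_mem measurableSet_Ioo] with τ hτ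
      rw [← ENNReal.ofReal_mul (hκ0 _ (mem_Ioi.mpr hτ.1))]
      refine ENNReal.ofReal_le_ofReal
        (mul_le_mul_of_nonneg_left
          (hℓmono (mem_Ioi.mpr (sub_pos.mpr hτ.2)) (mem_Ioi.mpr hσ.1) (by linarith [hτ.1]))
          (hκ0 _ (mem_Ioi.mpr hτ.1)))
    by_contra h
    push_neg at h
    rw [top_le_iff.mp h, ENNReal.top_mul (ENNReal.ofReal_pos.mpr hd).ne'] at h2
    simp at h2
  -- finiteness propagates to all of (0, t)
  have globfin : ∀ f : ℝ → ℝ, LocallyIntegrableOn f (Ioi 0) → ∀ b : ℝ, 0 < b →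
      (∫⁻ u in Ioo 0 b, ENNReal.ofReal (f u)) < ⊤ →
      ∀ t : ℝ, 0 < t → (∫⁻ u in Ioo 0 t, ENNReal.ofReal (f u)) < ⊤ := by
    intro f hf b hb hfin t ht
    have hsub : Ioo (0:ℝ) t ⊆ Ioo 0 b ∪ Icc b (max b t) := by
      intro x hx
      rcases lt_or_ge x b with h | h
      · exact Or.inl ⟨hx.1, h⟩
      · exact Or.inr ⟨h, le_trans hx.2.le (le_max_right _ _)⟩
    have hcpt : IntegrableOn f (Icc b (max b t)) := by
      refine hf.integrableOn_compact_subset (fun x hx => mem_Ioi.mpr (lt_of_lt_of_le hb hx.1))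
        isCompact_Icc
    have hfin2 : (∫⁻ u in Icc b (max b t), ENNReal.ofReal (f u)) < ⊤ := by
      refine lt_of_le_of_lt (lintegral_mono fun u => Real.ofReal_le_enorm (f u)) ?_
      exact hcpt.2
    calc ∫⁻ u in Ioo 0 t, ENNReal.ofReal (f u)
        ≤ ∫⁻ u in Ioo 0 b ∪ Icc b (max b t), ENNReal.ofReal (f u) := lintegral_mono_set hsub
      _ ≤ (∫⁻ u in Ioo 0 b, ENNReal.ofReal (f u))
            + ∫⁻ u in Icc b (max b t), ENNReal.ofReal (f u) := lintegral_union_le _ _ _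
      _ < ⊤ := ENNReal.add_lt_top.mpr ⟨hfin, hfin2⟩
  intro t ht
  have Fℓ : ∫⁻ u in Ioo 0 t, ENNReal.ofReal (ℓ u) < ⊤ := globfin ℓ hℓint τ₀ hτ₀.1 hℓfin0 t ht
  have Fκ : ∫⁻ u in Ioo 0 t, ENNReal.ofReal (κ u) < ⊤ := globfin κ hκint σ hσ.1 hκfin0 t ht
  have hκae : AEStronglyMeasurable κ (volume.restrict (Ioo 0 t)) :=
    hκsm.mono_measure (Measure.restrict_mono Ioo_subset_Ioi_self le_rfl)
  have hℓae : AEStronglyMeasurable ℓ (volume.restrict (Ioo 0 t)) :=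
    hℓsm.mono_measure (Measure.restrict_mono Ioo_subset_Ioi_self le_rfl)
  have hInt : ∀ f : ℝ → ℝ, (∀ x ∈ Ioi (0:ℝ), 0 ≤ f x) →
      AEStronglyMeasurable f (volume.restrict (Ioo 0 t)) →
      (∫⁻ u in Ioo 0 t, ENNReal.ofReal (f u)) < ⊤ → IntegrableOn f (Ioo 0 t) := by
    intro f h0 hae hfin
    refine ⟨hae, ?_⟩
    have hnn : 0 ≤ᵐ[volume.restrict (Ioo 0 t)] f := by
      filter_upwards [ae_restrict_mem measurableSet_Ioo] with x hx using h0 x (mem_Ioi.mpr hx.1)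
    exact (hasFiniteIntegral_iff_ofReal hnn).mpr hfin
  have hℓInt : IntegrableOn ℓ (Ioo 0 t) := hInt ℓ hℓ0 hℓae Fℓ
  have hκInt : IntegrableOn κ (Ioo 0 t) := hInt κ hκ0 hκae Fκ
  have hrepr : ∀ f : ℝ → ℝ, (∀ x ∈ Ioi (0:ℝ), 0 ≤ f x) → IntegrableOn f (Ioo 0 t) →
      ENNReal.ofReal (∫ τ in (0:ℝ)..t, f τ) = (∫⁻ τ in Ioo 0 t, ENNReal.ofReal (f τ))
      ∧ 0 ≤ ∫ τ in (0:ℝ)..t, f τ := by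
    intro f h0 hint
    have hnn : 0 ≤ᵐ[volume.restrict (Ioo 0 t)] f := by
      filter_upwards [ae_restrict_mem measurableSet_Ioo] with x hx using h0 x (mem_Ioi.mpr hx.1)
    have heq : (∫ τ in (0:ℝ)..t, f τ) = ∫ τ in Ioo 0 t, f τ := by
      rw [intervalIntegral.integral_of_le ht.le, integral_Ioc_eq_integral_Ioo]
    constructor
    · rw [heq, ofReal_integral_eq_lintegral_ofReal hint hnn]
    · rw [heq]; exact integral_nonneg_of_ae hnn
  obtain ⟨hLrepr, hL0⟩ := hrepr ℓ hℓ0 hℓInt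
  obtain ⟨hKrepr, hK0⟩ := hrepr κ hκ0 hκInt
  -- the double-integral function
  set Φ : ℝ × ℝ → ℝ≥0∞ :=
    fun p => if p.2 < p.1 then ENNReal.ofReal (κ p.2 * ℓ (p.1 - p.2)) else 0 with hΦdef
  have hΦm : AEMeasurable Φ ((volume.restrict (Ioo 0 t)).prod (volume.restrict (Ioo 0 t))) := by
    refine ⟨fun p => if p.2 < p.1 then ENNReal.ofReal (κ' p.2 * ℓ' (p.1 - p.2)) else 0, ?_, ?_⟩
    · refine Measurable.ite (measurableSet_lt measurable_snd measurable_fst) ?_ measurable_const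
      exact ((hκm.measurable_mk.comp measurable_snd).mul
        (hℓm.measurable_mk.comp (measurable_fst.sub measurable_snd))).ennreal_ofReal
    · have hSκ : volume ({x | κ x ≠ κ' x} ∩ Ioi 0) = 0 := by
        have h := hκm.ae_eq_mk
        rw [Filter.EventuallyEq, ae_iff, Measure.restrict_apply' measurableSet_Ioi] at h
        exact h
      have hSℓ : volume ({x | ℓ x ≠ ℓ' x} ∩ Ioi 0) = 0 := by
        have h := hℓm.ae_eq_mk
        rw [Filter.EventuallyEq, ae_iff, Measure.restrict_apply' measurableSet_Ioi] at h
        exact h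
      set Nκ := toMeasurable volume ({x | κ x ≠ κ' x} ∩ Ioi 0) with hNκdef
      set Nℓ := toMeasurable volume ({x | ℓ x ≠ ℓ' x} ∩ Ioi 0) with hNℓdef
      have hNκ0 : volume Nκ = 0 := by rw [hNκdef, measure_toMeasurable]; exact hSκ
      have hNℓ0 : volume Nℓ = 0 := by rw [hNℓdef, measure_toMeasurable]; exact hSℓ
      have hB1 : ((volume.restrict (Ioo 0 t)).prod (volume.restrict (Ioo 0 t)))
          (Prod.snd ⁻¹' Nκ) = 0 := by
        have hset : (Prod.snd ⁻¹' Nκ : Set (ℝ × ℝ)) = (univ : Set ℝ) ×ˢ Nκ := by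
          ext p; simp
        rw [hset, Measure.prod_prod]
        have h0 : volume.restrict (Ioo 0 t) Nκ = 0 := by
          rw [Measure.restrict_apply' measurableSet_Ioo]
          exact measure_mono_null inter_subset_left hNκ0
        rw [h0, mul_zero]
      have hB2 : ((volume.restrict (Ioo 0 t)).prod (volume.restrict (Ioo 0 t)))
          ((fun p : ℝ × ℝ => p.1 - p.2) ⁻¹' Nℓ) = 0 := by
        rw [Measure.prod_restrict,
          Measure.restrict_apply (show MeasurableSet ((fun p : ℝ × ℝ => p.1 - p.2) ⁻¹' Nℓ) from (measurable_fst.sub measurable_snd)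
            (measurableSet_toMeasurable _ _))]
        exact measure_mono_null inter_subset_left
          ((quasiMeasurePreserving_sub volume volume).preimage_null hNℓ0)
      have hrect : ∀ᵐ p ∂((volume.restrict (Ioo 0 t)).prod (volume.restrict (Ioo 0 t))),
          p ∈ Ioo (0:ℝ) t ×ˢ Ioo (0:ℝ) t := by
        rw [Measure.prod_restrict]
        exact ae_restrict_mem (measurableSet_Ioo.prod measurableSet_Ioo)
      filter_upwards [hrect, measure_eq_zero_iff_ae_notMem.mp hB1, measure_eq_zero_iff_ae_notMem.mp hB2]
        with p hp h1 h2
      by_cases hlt : p.2 < p.1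
      · have hκeq : κ p.2 = κ' p.2 := by
          by_contra hne
          exact h1 (subset_toMeasurable _ _ ⟨hne, mem_Ioi.mpr hp.2.1⟩)
        have hℓeq : ℓ (p.1 - p.2) = ℓ' (p.1 - p.2) := by
          by_contra hne
          exact h2 (subset_toMeasurable _ _ ⟨hne, mem_Ioi.mpr (sub_pos.mpr hlt)⟩)
        simp only [hΦdef, if_pos hlt, hκeq, hℓeq]
      · simp only [hΦdef, if_neg hlt]
  have step2 : ∀ s ∈ Ioo (0:ℝ) t, (∫⁻ τ in Ioo 0 t, Φ (s, τ)) = 1 := by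
    intro s hs
    have hind : ∀ τ : ℝ, Φ (s, τ)
        = (Iio s).indicator (fun τ => ENNReal.ofReal (κ τ * ℓ (s - τ))) τ := by
      intro τ
      by_cases h : τ < s
      · simp only [hΦdef, if_pos h]; rw [indicator_of_mem (mem_Iio.mpr h)]
      · simp only [hΦdef, if_neg h]; rw [indicator_of_notMem (fun hc => h (mem_Iio.mp hc))]
    simp_rw [hind]
    rw [lintegral_indicator measurableSet_Iio, Measure.restrict_restrict measurableSet_Iio]
    have hset : Iio s ∩ Ioo 0 t = Ioo 0 s := by
      ext x
      simp only [mem_inter_iff, mem_Iio, mem_Ioo]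
      constructor
      · rintro ⟨h1, h2, _⟩; exact ⟨h2, h1⟩
      · rintro ⟨h1, h2⟩; exact ⟨h2, h1, by linarith [hs.2]⟩
    rw [hset, hconvL s hs.1]
  have step3 : ENNReal.ofReal t ≤ ∫⁻ s in Ioo 0 t, ∫⁻ τ in Ioo 0 t, Φ (s, τ) := by
    have h1 : ENNReal.ofReal t = ∫⁻ _ in Ioo (0:ℝ) t, (1:ℝ≥0∞) := by
      rw [setLIntegral_one, Real.volume_Ioo, sub_zero]
    rw [h1]
    refine lintegral_mono_ae ?_
    filter_upwards [ae_restrict_mem measurableSet_Ioo] with s hs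
    rw [step2 s hs]
  have step4 : (∫⁻ s in Ioo 0 t, ∫⁻ τ in Ioo 0 t, Φ (s, τ))
      = ∫⁻ τ in Ioo 0 t, ∫⁻ s in Ioo 0 t, Φ (s, τ) :=
    lintegral_lintegral_swap hΦm
  have step5 : ∀ τ ∈ Ioo (0:ℝ) t, (∫⁻ s in Ioo 0 t, Φ (s, τ))
      ≤ ENNReal.ofReal (κ τ) * ∫⁻ u in Ioo 0 t, ENNReal.ofReal (ℓ u) := by
    intro τ hτ
    have hind : ∀ s : ℝ, Φ (s, τ)
        = (Ioi τ).indicator (fun s => ENNReal.ofReal (κ τ) * ENNReal.ofReal (ℓ (s - τ))) s := by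
      intro s
      by_cases h : τ < s
      · simp only [hΦdef, if_pos h]
        rw [indicator_of_mem (mem_Ioi.mpr h), ENNReal.ofReal_mul (hκ0 τ (mem_Ioi.mpr hτ.1))]
      · simp only [hΦdef, if_neg h]; rw [indicator_of_notMem (fun hc => h (mem_Ioi.mp hc))]
    simp_rw [hind]
    rw [lintegral_indicator measurableSet_Ioi, Measure.restrict_restrict measurableSet_Ioi]
    have hset : Ioi τ ∩ Ioo 0 t = Ioo τ t := by
      ext x
      simp only [mem_inter_iff, mem_Ioi, mem_Ioo]
      constructor
      · rintro ⟨h1, _, h3⟩; exact ⟨h1, h3⟩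
      · rintro ⟨h1, h2⟩; exact ⟨h1, lt_trans hτ.1 h1, h2⟩
    rw [hset, lintegral_const_mul' _ _ ENNReal.ofReal_ne_top]
    refine mul_le_mul_right ?_ _
    have hshift := lint_shift (fun u => ENNReal.ofReal (ℓ u)) τ τ t
    rw [sub_self] at hshift
    rw [hshift]
    exact lintegral_mono_set (Ioo_subset_Ioo_right (by linarith [hτ.1]))
  have step6 : (∫⁻ τ in Ioo 0 t, ∫⁻ s in Ioo 0 t, Φ (s, τ))
      ≤ (∫⁻ u in Ioo 0 t, ENNReal.ofReal (ℓ u)) * ∫⁻ τ in Ioo 0 t, ENNReal.ofReal (κ τ) := by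
    calc (∫⁻ τ in Ioo 0 t, ∫⁻ s in Ioo 0 t, Φ (s, τ))
        ≤ ∫⁻ τ in Ioo 0 t, (∫⁻ u in Ioo 0 t, ENNReal.ofReal (ℓ u)) * ENNReal.ofReal (κ τ) := by
          refine lintegral_mono_ae ?_
          filter_upwards [ae_restrict_mem measurableSet_Ioo] with τ hτ
          rw [mul_comm]
          exact step5 τ hτ
      _ = _ := lintegral_const_mul' _ _ Fℓ.ne
  have final : ENNReal.ofReal t
      ≤ ENNReal.ofReal ((∫ τ in (0:ℝ)..t, ℓ τ) * (∫ τ in (0:ℝ)..t, κ τ)) := by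
    rw [ENNReal.ofReal_mul hL0, hLrepr, hKrepr]
    exact le_trans step3 (le_trans step4.le step6)
  exact (ENNReal.ofReal_le_ofReal_iff (mul_nonneg hL0 hK0)).mp final
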